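/- Let Assumption 2 hold (for every i, ℓ_{y_i} is differentiable on ℝ^{d_y}, and any q ∈ ℝ^{d_y} with ∇ℓ_{y_i}(q) = 0 is a global minimum of ℓ_{y_i}), let Assumption 3 hold (for all i, j, if x_i = x_j then y_i = y_j), and let λ > 0. Then at every local minimum (θ, a, b, W) of the modified objective L̃: (i) θ is a global minimum of L; (ii) a = 0, so f(x;θ) + g(x;a,b,W) = f(x;θ) for all x ∈ ℝ^{d_x} and L̃(θ,a,b,W) = L(θ); and (iii) for every i ∈ {1,…,m}, the output f(x_i;θ) is a global minimum of the map q ↦ ℓ(q, y_i) on ℝ^{d_y}. -/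

import Mathlib

open scoped RealInnerProductSpace

noncomputable section

/-- The added neuron: `g(x; a, b, W)ₖ = aₖ · exp(⟨wₖ, x⟩ + bₖ)`. -/
def addedNeuron (dx dy : ℕ) (a b : EuclideanSpace ℝ (Fin dy))
    (W : Fin dy → EuclideanSpace ℝ (Fin dx)) (x : EuclideanSpace ℝ (Fin dx)) :
    EuclideanSpace ℝ (Fin dy) :=
  WithLp.toLp 2 (fun k => a k * Real.exp (⟪W k, x⟫ + b k))

/-- If `∑ dᵢ e^{t rᵢ} = 0` for all `t` in an interval around `0`, then all the moments
`∑ dᵢ rᵢⁿ` vanish. -/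
lemma exp_moments_aux074 {m : ℕ} (d r : Fin m → ℝ) {δ : ℝ} (hδ : 0 < δ)
    (h : ∀ t : ℝ, |t| < δ → ∑ i, d i * Real.exp (t * r i) = 0) :
    ∀ n : ℕ, ∑ i, d i * r i ^ n = 0 := by
  have key : ∀ n : ℕ, ∀ t : ℝ, |t| < δ → ∑ i, d i * r i ^ n * Real.exp (t * r i) = 0 := by
    intro n
    induction n with
    | zero => intro t ht; simpa using h t ht
    | succ n ih =>
      intro t ht
      have hd : ∀ s : ℝ, HasDerivAt (fun u : ℝ => ∑ i, d i * r i ^ n * Real.exp (u * r i))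
          (∑ i, d i * r i ^ (n + 1) * Real.exp (s * r i)) s := by
        intro s
        refine HasDerivAt.fun_sum (𝕜 := ℝ) (F := ℝ) fun i _ => ?_
        have h1 : HasDerivAt (fun u : ℝ => Real.exp (u * r i)) (Real.exp (s * r i) * r i) s := by
          have := ((hasDerivAt_id s).mul_const (r i)).exp
          simpa using this
        have := h1.const_mul (d i * r i ^ n)
        exact this.congr_deriv (by ring)
      have heq : (fun u : ℝ => ∑ i, d i * r i ^ n * Real.exp (u * r i)) =ᶠ[nhds t] (fun _ => 0) := by
        have hmem : Metric.ball (0:ℝ) δ ∈ nhds t := by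
          refine (Metric.isOpen_ball).mem_nhds ?_
          simpa [Real.dist_eq] using ht
        filter_upwards [hmem] with s hs
        exact ih s (by simpa [Real.dist_eq] using hs)
      have h0 : deriv (fun u : ℝ => ∑ i, d i * r i ^ n * Real.exp (u * r i)) t = 0 := by
        rw [heq.deriv_eq]; simp
      rw [(hd t).deriv] at h0
      exact h0
  intro n
  have := key n 0 (by simpa using hδ)
  simpa using this

/-- If all the moments `∑ dᵢ rᵢⁿ` vanish, then the sums of `dᵢ` over each level set of `r`
vanish. -/
lemma group_sum_zero_aux074 {m : ℕ} (d r : Fin m → ℝ)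
    (h : ∀ n : ℕ, ∑ i, d i * r i ^ n = 0) (i0 : Fin m) :
    ∑ i ∈ Finset.univ.filter (fun i => r i = r i0), d i = 0 := by
  classical
  set T : Finset ℝ := (Finset.univ.image r).erase (r i0) with hT
  set P : Polynomial ℝ := ∏ ρ ∈ T, (Polynomial.X - Polynomial.C ρ) with hP
  have hsum : ∑ i, d i * P.eval (r i) = 0 := by
    have : ∀ i, d i * P.eval (r i)
        = ∑ n ∈ Finset.range (P.natDegree + 1), P.coeff n * (d i * r i ^ n) := by
      intro i
      rw [Polynomial.eval_eq_sum_range, Finset.mul_sum]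
      congr 1; ext n; ring
    simp_rw [this]
    rw [Finset.sum_comm]
    simp_rw [← Finset.mul_sum, h]
    simp
  have heval0 : ∀ i, r i ≠ r i0 → P.eval (r i) = 0 := by
    intro i hne
    rw [hP, Polynomial.eval_prod]
    refine Finset.prod_eq_zero
      (Finset.mem_erase.2 ⟨hne, Finset.mem_image_of_mem r (Finset.mem_univ i)⟩) ?_
    simp
  have hpi : P.eval (r i0) ≠ 0 := by
    rw [hP, Polynomial.eval_prod]
    refine Finset.prod_ne_zero_iff.2 fun ρ hρ => ?_
    have : ρ ≠ r i0 := (Finset.mem_erase.1 hρ).1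
    simp [sub_ne_zero]
    exact fun hh => this hh.symm
  have : ∑ i, d i * P.eval (r i)
      = (∑ i ∈ Finset.univ.filter (fun i => r i = r i0), d i) * P.eval (r i0) := by
    rw [← Finset.sum_filter_add_sum_filter_not Finset.univ (fun i => r i = r i0)]
    have h1 : ∑ i ∈ Finset.univ.filter (fun i => r i = r i0), d i * P.eval (r i)
        = (∑ i ∈ Finset.univ.filter (fun i => r i = r i0), d i) * P.eval (r i0) := by
      rw [Finset.sum_mul]
      exact Finset.sum_congr rfl fun i hi => by rw [(Finset.mem_filter.1 hi).2]
    have h2 : ∑ i ∈ Finset.univ.filter (fun i => ¬ r i = r i0), d i * P.eval (r i) = 0 := by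
      refine Finset.sum_eq_zero fun i hi => ?_
      rw [heval0 i (Finset.mem_filter.1 hi).2, mul_zero]
    rw [h1, h2, add_zero]
  rw [this] at hsum
  exact (mul_eq_zero.1 hsum).resolve_right hpi

/-- There is a direction `v` which separates the distinct points among the `x i`. -/
lemma exists_good_direction_aux074 {m dx : ℕ} (hdx : 0 < dx)
    (x : Fin m → EuclideanSpace ℝ (Fin dx)) :
    ∃ v : EuclideanSpace ℝ (Fin dx), ∀ i j : Fin m, x i ≠ x j → ⟪v, x i⟫ ≠ ⟪v, x j⟫ := by
  classical
  have : Nontrivial (EuclideanSpace ℝ (Fin dx)) := by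
    refine nontrivial_of_ne (EuclideanSpace.single ⟨0, hdx⟩ 1) 0 ?_
    intro hh
    have := congrArg (fun v => v ⟨0, hdx⟩) hh
    simp [EuclideanSpace.single_apply] at this
  set μ : MeasureTheory.Measure (EuclideanSpace ℝ (Fin dx)) := MeasureTheory.volume with hμ
  set bad : Set (EuclideanSpace ℝ (Fin dx)) :=
    ⋃ p ∈ {p : Fin m × Fin m | x p.1 ≠ x p.2}, {v | ⟪v, x p.1 - x p.2⟫ = 0} with hbad
  have hbadnull : μ bad = 0 := by
    refine MeasureTheory.measure_biUnion_null_iff ((Set.finite_univ (α := Fin m × Fin m)).subset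
      (Set.subset_univ _)).countable |>.2 ?_
    intro p hp
    have hu : x p.1 - x p.2 ≠ 0 := sub_ne_zero.2 hp
    have : {v : EuclideanSpace ℝ (Fin dx) | ⟪v, x p.1 - x p.2⟫ = 0}
        = (LinearMap.ker (innerSL ℝ (x p.1 - x p.2)).toLinearMap : Set _) := by
      ext v
      simp only [Set.mem_setOf_eq, SetLike.mem_coe, LinearMap.mem_ker,
        ContinuousLinearMap.coe_coe, innerSL_apply_apply]
      rw [real_inner_comm]
    rw [this]
    refine MeasureTheory.Measure.addHaar_submodule μ _ ?_
    intro htop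
    have : ⟪x p.1 - x p.2, x p.1 - x p.2⟫ = 0 := by
      have hm : (x p.1 - x p.2) ∈ LinearMap.ker (innerSL ℝ (x p.1 - x p.2)).toLinearMap := by
        rw [htop]; trivial
      simpa only [LinearMap.mem_ker, ContinuousLinearMap.coe_coe, innerSL_apply_apply] using hm
    exact hu (inner_self_eq_zero.1 this)
  have huniv : μ (Set.univ : Set (EuclideanSpace ℝ (Fin dx))) ≠ 0 := by
    simp [hμ]
  have : bad ≠ Set.univ := by
    intro hh; rw [hh] at hbadnull; exact huniv hbadnull
  obtain ⟨v, hv⟩ : ∃ v, v ∉ bad := by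
    by_contra hc
    push_neg at hc
    exact this (Set.eq_univ_of_forall hc)
  refine ⟨v, fun i j hne hinner => ?_⟩
  apply hv
  refine Set.mem_biUnion
    (show ((i,j) : Fin m × Fin m) ∈ {p : Fin m × Fin m | x p.1 ≠ x p.2} from hne) ?_
  rw [Set.mem_setOf_eq, inner_sub_right, hinner, sub_self]

/-- If a linear combination of exponentials `∑ cᵢ e^{⟨w, xᵢ⟩}` vanishes for all `w` in a ball,
and the coefficients are constant on level sets of `x`, then all coefficients vanish. -/
lemma sum_exp_zero_of_ball_aux074 {m dx : ℕ} (hdx : 0 < dx)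
    (x : Fin m → EuclideanSpace ℝ (Fin dx)) (c : Fin m → ℝ)
    (w0 : EuclideanSpace ℝ (Fin dx)) {ε : ℝ} (hε : 0 < ε)
    (h : ∀ w : EuclideanSpace ℝ (Fin dx), dist w w0 < ε →
      ∑ i, c i * Real.exp (⟪w, x i⟫) = 0)
    (hconst : ∀ i j, x i = x j → c i = c j) :
    ∀ i0, c i0 = 0 := by
  classical
  intro i0
  obtain ⟨v, hv⟩ := exists_good_direction_aux074 hdx x
  have hδ : 0 < ε / (‖v‖ + 1) := by positivity
  have hmom : ∀ t : ℝ, |t| < ε / (‖v‖ + 1) →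
      ∑ i, (c i * Real.exp (⟪w0, x i⟫)) * Real.exp (t * ⟪v, x i⟫) = 0 := by
    intro t ht
    have hnv : (0:ℝ) < ‖v‖ + 1 := by positivity
    have hwd : dist (w0 + t • v) w0 < ε := by
      rw [dist_eq_norm, add_sub_cancel_left, norm_smul, Real.norm_eq_abs]
      calc |t| * ‖v‖ ≤ |t| * (‖v‖ + 1) := by nlinarith [abs_nonneg t, norm_nonneg v]
        _ < (ε / (‖v‖ + 1)) * (‖v‖ + 1) := mul_lt_mul_of_pos_right ht hnv
        _ = ε := by field_simp
    have hz := h (w0 + t • v) hwd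
    rw [← hz]
    refine Finset.sum_congr rfl fun i _ => ?_
    rw [inner_add_left, real_inner_smul_left,
      show ⟪w0, x i⟫ + t * ⟪v, x i⟫ = (t * ⟪v, x i⟫) + ⟪w0, x i⟫ by ring, Real.exp_add]
    ring
  have hmoms := exp_moments_aux074 _ _ hδ hmom
  have hgroup := group_sum_zero_aux074 _ _ hmoms i0
  have hfilter : Finset.univ.filter (fun i => ⟪v, x i⟫ = ⟪v, x i0⟫)
      = Finset.univ.filter (fun i => x i = x i0) := by
    ext i
    simp only [Finset.mem_filter, Finset.mem_univ, true_and]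
    constructor
    · intro hh; by_contra hne; exact hv i i0 hne hh
    · intro hh; rw [hh]
  rw [hfilter] at hgroup
  have hdconst : ∀ i ∈ Finset.univ.filter (fun i => x i = x i0),
      c i * Real.exp (⟪w0, x i⟫) = c i0 * Real.exp (⟪w0, x i0⟫) := by
    intro i hi
    have hxi : x i = x i0 := (Finset.mem_filter.1 hi).2
    rw [hconst i i0 hxi, hxi]
  rw [Finset.sum_congr rfl hdconst, Finset.sum_const, nsmul_eq_mul] at hgroup
  have hcard : 0 < ((Finset.univ.filter (fun i => x i = x i0)).card : ℝ) := by
    have : 0 < (Finset.univ.filter (fun i => x i = x i0)).card :=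
      Finset.card_pos.2 ⟨i0, Finset.mem_filter.2 ⟨Finset.mem_univ _, rfl⟩⟩
    exact_mod_cast this
  have hd0 : c i0 * Real.exp (⟪w0, x i0⟫) = 0 := by
    rcases mul_eq_zero.1 hgroup with hh | hh
    · exact absurd hh (ne_of_gt hcard)
    · exact hh
  rcases mul_eq_zero.1 hd0 with hh | hh
  · exact hh
  · exact absurd hh (Real.exp_ne_zero _)

/-- Under Assumption 2 (each `ℓ_{y_i}` is differentiable and every
stationary point of `ℓ_{y_i}` is a global minimum of `ℓ_{y_i}`), Assumption 3 (label
consistency: `x_i = x_j → y_i = y_j`) and `λ > 0`, at every local minimum `(θ, a, b, W)`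
of `L̃`: (i) `θ` is a global minimum of `L`; (ii) `a = 0`, so `f + g = f` and
`L̃(θ,a,b,W) = L(θ)`; (iii) each `f(x_i; θ)` is a global minimum of `q ↦ ℓ(q, y_i)`. -/
theorem elimination_realizable
    (m dx dy dθ : ℕ) (hm : 0 < m) (hdx : 0 < dx) (hdy : 0 < dy) (hdθ : 0 < dθ)
    (x : Fin m → EuclideanSpace ℝ (Fin dx))
    (y : Fin m → EuclideanSpace ℝ (Fin dy))
    (f : EuclideanSpace ℝ (Fin dx) → EuclideanSpace ℝ (Fin dθ) → EuclideanSpace ℝ (Fin dy))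
    (ℓ : EuclideanSpace ℝ (Fin dy) → EuclideanSpace ℝ (Fin dy) → ℝ)
    -- Assumption 2: each ℓ_{y_i} is differentiable and its stationary points are global minima
    (hdiff : ∀ i : Fin m, Differentiable ℝ (fun q => ℓ q (y i)))
    (hstat : ∀ (i : Fin m) (q : EuclideanSpace ℝ (Fin dy)),
      gradient (fun q' => ℓ q' (y i)) q = 0 →
        ∀ q' : EuclideanSpace ℝ (Fin dy), ℓ q (y i) ≤ ℓ q' (y i))
    -- Assumption 3: label consistency
    (hrealizable : ∀ i j : Fin m, x i = x j → y i = y j)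
    (lam : ℝ) (hlam : 0 < lam)
    -- the original objective L
    (L : EuclideanSpace ℝ (Fin dθ) → ℝ)
    (hL : ∀ θ, L θ = (1 / (m : ℝ)) * ∑ i, ℓ (f (x i) θ) (y i))
    -- the modified objective L̃
    (Lt : EuclideanSpace ℝ (Fin dθ) → EuclideanSpace ℝ (Fin dy) → EuclideanSpace ℝ (Fin dy) →
      (Fin dy → EuclideanSpace ℝ (Fin dx)) → ℝ)
    (hLt : ∀ θ a b W, Lt θ a b W =
      (1 / (m : ℝ)) * ∑ i, ℓ (f (x i) θ + addedNeuron dx dy a b W (x i)) (y i)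
        + lam * ‖a‖ ^ 2)
    (θ : EuclideanSpace ℝ (Fin dθ)) (a b : EuclideanSpace ℝ (Fin dy))
    (W : Fin dy → EuclideanSpace ℝ (Fin dx))
    (hmin : IsLocalMin (fun p : EuclideanSpace ℝ (Fin dθ) × EuclideanSpace ℝ (Fin dy) ×
        EuclideanSpace ℝ (Fin dy) × (Fin dy → EuclideanSpace ℝ (Fin dx)) =>
        Lt p.1 p.2.1 p.2.2.1 p.2.2.2) (θ, a, b, W)) :
    (∀ θ' : EuclideanSpace ℝ (Fin dθ), L θ ≤ L θ') ∧
    (a = 0 ∧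
      (∀ x' : EuclideanSpace ℝ (Fin dx),
        f x' θ + addedNeuron dx dy a b W x' = f x' θ) ∧
      Lt θ a b W = L θ) ∧
    (∀ (i : Fin m) (q : EuclideanSpace ℝ (Fin dy)), ℓ (f (x i) θ) (y i) ≤ ℓ q (y i)) := by
  classical
  set F := (fun p : EuclideanSpace ℝ (Fin dθ) × EuclideanSpace ℝ (Fin dy) ×
        EuclideanSpace ℝ (Fin dy) × (Fin dy → EuclideanSpace ℝ (Fin dx)) =>
        Lt p.1 p.2.1 p.2.2.1 p.2.2.2) with hF
  -- Step 1 : `a = 0`.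
  have ha : a = 0 := by
    set c : EuclideanSpace ℝ (Fin dy) := (WithLp.equiv 2 _).symm (fun _ => (1:ℝ)) with hc
    set γ : ℝ → (EuclideanSpace ℝ (Fin dθ) × EuclideanSpace ℝ (Fin dy) ×
          EuclideanSpace ℝ (Fin dy) × (Fin dy → EuclideanSpace ℝ (Fin dx))) :=
      fun s => (θ, Real.exp s • a, b - s • c, W) with hγ
    have hγcont : ContinuousAt γ 0 := by
      apply ContinuousAt.prodMk continuousAt_const
      apply ContinuousAt.prodMk
      · exact ((Real.continuous_exp).smul continuous_const).continuousAt
      apply ContinuousAt.prodMk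
      · exact (continuous_const.sub (continuous_id.smul continuous_const)).continuousAt
      · exact continuousAt_const
    have hγ0 : γ 0 = (θ, a, b, W) := by
      simp [hγ]
    have hcomp : IsLocalMin (F ∘ γ) 0 := by
      refine IsLocalMin.comp_continuous ?_ hγcont
      rw [hγ0]; exact hmin
    set C : ℝ := (1 / (m : ℝ)) * ∑ i, ℓ (f (x i) θ + addedNeuron dx dy a b W (x i)) (y i)
      with hC
    have heq : ∀ s : ℝ, (F ∘ γ) s = C + lam * ‖a‖ ^ 2 * Real.exp (2 * s) := by
      intro s
      have hadd : ∀ x' : EuclideanSpace ℝ (Fin dx),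
          addedNeuron dx dy (Real.exp s • a) (b - s • c) W x' = addedNeuron dx dy a b W x' := by
        intro x'
        ext k
        show (Real.exp s • a) k * Real.exp (⟪W k, x'⟫ + (b - s • c) k)
          = a k * Real.exp (⟪W k, x'⟫ + b k)
        have hck : (b - s • c) k = b k - s := by
          simp [hc, PiLp.sub_apply, PiLp.smul_apply, WithLp.equiv_symm_apply]
        rw [hck, PiLp.smul_apply, smul_eq_mul,
          show ⟪W k, x'⟫ + (b k - s) = (⟪W k, x'⟫ + b k) - s by ring, Real.exp_sub]
        field_simp [Real.exp_ne_zero]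
      have hnorm : ‖Real.exp s • a‖ ^ 2 = ‖a‖ ^ 2 * Real.exp (2 * s) := by
        rw [norm_smul, mul_pow, Real.norm_eq_abs, abs_of_pos (Real.exp_pos s), sq,
          ← Real.exp_add]
        ring
      show Lt θ (Real.exp s • a) (b - s • c) W = _
      rw [hLt]
      simp only [hadd, hnorm, hC]
      ring
    have hloc : IsLocalMin (fun s : ℝ => C + lam * ‖a‖ ^ 2 * Real.exp (2 * s)) 0 := by
      have : (F ∘ γ) = fun s : ℝ => C + lam * ‖a‖ ^ 2 * Real.exp (2 * s) := funext heq
      rwa [this] at hcomp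
    have hder : HasDerivAt (fun s : ℝ => C + lam * ‖a‖ ^ 2 * Real.exp (2 * s))
        (lam * ‖a‖ ^ 2 * (Real.exp (2 * 0) * 2)) 0 := by
      have h1 : HasDerivAt (fun s : ℝ => Real.exp (2 * s)) (Real.exp (2 * 0) * 2) 0 := by
        simpa using ((hasDerivAt_id (0:ℝ)).const_mul 2).exp
      exact (h1.const_mul (lam * ‖a‖ ^ 2)).const_add C
    have h0 := hloc.deriv_eq_zero
    rw [hder.deriv] at h0
    simp only [mul_zero, Real.exp_zero, one_mul] at h0
    have hsq : ‖a‖ ^ 2 = 0 := by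
      by_contra hX
      have hpos : 0 < ‖a‖ ^ 2 := lt_of_le_of_ne (sq_nonneg _) (Ne.symm hX)
      nlinarith
    exact norm_eq_zero.1 (pow_eq_zero_iff two_ne_zero |>.1 hsq)
  subst ha
  -- the added neuron vanishes identically
  have hadd0 : ∀ (b' : EuclideanSpace ℝ (Fin dy)) (W' : Fin dy → EuclideanSpace ℝ (Fin dx))
      (x' : EuclideanSpace ℝ (Fin dx)),
      addedNeuron dx dy (0 : EuclideanSpace ℝ (Fin dy)) b' W' x' = 0 := by
    intro b' W' x'
    ext j
    show (0 : EuclideanSpace ℝ (Fin dy)) j * _ = (0 : EuclideanSpace ℝ (Fin dy)) j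
    simp
  have hLt0 : Lt θ 0 b W = L θ := by
    rw [hLt, hL]
    simp [hadd0]
  -- Step 3 : first-order conditions in the `(a, W)` directions
  have hkey : ∀ k : Fin dy, ∃ ε > 0, ∀ w : EuclideanSpace ℝ (Fin dx), dist w (W k) < ε →
      ∑ i, (fderiv ℝ (fun p => ℓ p (y i)) (f (x i) θ)) (EuclideanSpace.single k 1)
        * Real.exp (⟪w, x i⟫ + b k) = 0 := by
    intro k
    set q : Fin m → EuclideanSpace ℝ (Fin dy) := fun i => f (x i) θ with hq
    set ek : EuclideanSpace ℝ (Fin dy) := EuclideanSpace.single k 1 with hek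
    set ψ : ℝ × EuclideanSpace ℝ (Fin dx) → (EuclideanSpace ℝ (Fin dθ) ×
        EuclideanSpace ℝ (Fin dy) ×
        EuclideanSpace ℝ (Fin dy) × (Fin dy → EuclideanSpace ℝ (Fin dx))) :=
      fun p => (θ, p.1 • ek, b, fun j => if j = k then p.2 else W j) with hψ
    have hψcont : ContinuousAt ψ (0, W k) := by
      apply ContinuousAt.prodMk continuousAt_const
      apply ContinuousAt.prodMk
      · exact (continuous_fst.smul continuous_const).continuousAt
      apply ContinuousAt.prodMk continuousAt_const
      refine Continuous.continuousAt (continuous_pi fun j => ?_)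
      by_cases h : j = k
      · simp only [h, if_true]; exact continuous_snd
      · simp only [h, if_false]; exact continuous_const
    have hψ0 : ψ (0, W k) = (θ, 0, b, W) := by
      simp only [hψ, zero_smul]
      refine Prod.ext rfl (Prod.ext rfl (Prod.ext rfl ?_))
      funext j
      by_cases h : j = k <;> simp [h]
    have hcomp : IsLocalMin (F ∘ ψ) (0, W k) := by
      refine IsLocalMin.comp_continuous ?_ hψcont
      rw [hψ0]; exact hmin
    obtain ⟨ε, hε, H⟩ := Metric.eventually_nhds_iff.1 hcomp
    refine ⟨ε, hε, fun w hw => ?_⟩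
    set u : Fin m → EuclideanSpace ℝ (Fin dy) :=
      fun i => EuclideanSpace.single k (Real.exp (⟪w, x i⟫ + b k)) with hu
    have hφeq : ∀ t : ℝ, Lt θ (t • ek) b (fun j => if j = k then w else W j)
        = (1 / (m : ℝ)) * ∑ i, ℓ (q i + t • u i) (y i) + lam * t ^ 2 := by
      intro t
      rw [hLt]
      have h1 : ∀ i, addedNeuron dx dy (t • ek) b (fun j => if j = k then w else W j) (x i)
          = t • u i := by
        intro i
        ext j
        show (t • ek) j * Real.exp (⟪if j = k then w else W j, x i⟫ + b j) = (t • u i) j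
        by_cases h : j = k
        · subst h
          simp [hek, hu, EuclideanSpace.single_apply, PiLp.smul_apply, smul_eq_mul, mul_assoc]
        · simp [hek, hu, EuclideanSpace.single_apply, h, PiLp.smul_apply]
      have h2 : ‖t • ek‖ ^ 2 = t ^ 2 := by
        rw [norm_smul, hek, EuclideanSpace.norm_single, mul_pow, Real.norm_eq_abs,
          sq_abs, norm_one, one_pow, mul_one]
      simp only [h1, h2, hq]
    have hbase : Lt θ (0 : EuclideanSpace ℝ (Fin dy)) b W
        = (1 / (m : ℝ)) * ∑ i, ℓ (q i + (0:ℝ) • u i) (y i) + lam * (0:ℝ) ^ 2 := by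
      rw [hLt]
      simp [hadd0, hq]
    have hφmin : IsLocalMin (fun t : ℝ =>
        (1 / (m : ℝ)) * ∑ i, ℓ (q i + t • u i) (y i) + lam * t ^ 2) 0 := by
      refine Metric.eventually_nhds_iff.2 ⟨ε, hε, fun t ht => ?_⟩
      have hdist : dist ((t, w) : ℝ × EuclideanSpace ℝ (Fin dx)) (0, W k) < ε := by
        rw [Prod.dist_eq]
        exact max_lt (by simpa [Real.dist_eq] using ht) hw
      have := H hdist
      rw [Function.comp_apply, Function.comp_apply, hψ0] at this
      simp only [hψ] at this
      calc (1 / (m : ℝ)) * ∑ i, ℓ (q i + (0:ℝ) • u i) (y i) + lam * (0:ℝ) ^ 2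
          = Lt θ 0 b W := hbase.symm
        _ ≤ Lt θ (t • ek) b (fun j => if j = k then w else W j) := this
        _ = _ := hφeq t
    have hline : ∀ i, HasDerivAt (fun t : ℝ => q i + t • u i) (u i) 0 := by
      intro i
      simpa using ((hasDerivAt_id (0:ℝ)).smul_const (u i)).const_add (q i)
    have hterm : ∀ i, HasDerivAt (fun t : ℝ => ℓ (q i + t • u i) (y i))
        ((fderiv ℝ (fun p => ℓ p (y i)) (q i)) (u i)) 0 := by
      intro i
      have hF : HasFDerivAt (fun p => ℓ p (y i)) (fderiv ℝ (fun p => ℓ p (y i)) (q i))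
          ((fun t : ℝ => q i + t • u i) 0) := by
        simpa using ((hdiff i) (q i)).hasFDerivAt
      exact hF.comp_hasDerivAt 0 (hline i)
    have hsum : HasDerivAt (fun t : ℝ =>
        (1 / (m : ℝ)) * ∑ i, ℓ (q i + t • u i) (y i) + lam * t ^ 2)
        ((1 / (m : ℝ)) * ∑ i, (fderiv ℝ (fun p => ℓ p (y i)) (q i)) (u i) + lam * (2 * 0)) 0 := by
      have hs : HasDerivAt (fun t : ℝ => ∑ i, ℓ (q i + t • u i) (y i))
          (∑ i, (fderiv ℝ (fun p => ℓ p (y i)) (q i)) (u i)) 0 :=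
        HasDerivAt.fun_sum (fun i _ => hterm i)
      have h2 : HasDerivAt (fun t : ℝ => lam * t ^ 2) (lam * (2 * 0)) 0 := by
        simpa using (hasDerivAt_pow 2 (0:ℝ)).const_mul lam
      exact (hs.const_mul _).add h2
    have h0 := hφmin.deriv_eq_zero
    rw [hsum.deriv] at h0
    have hm' : (1 / (m : ℝ)) ≠ 0 := by
      have : (0:ℝ) < m := by exact_mod_cast hm
      positivity
    have hS : ∑ i, (fderiv ℝ (fun p => ℓ p (y i)) (q i)) (u i) = 0 := by
      simp only [mul_zero, add_zero] at h0
      exact (mul_eq_zero.1 h0).resolve_left hm'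
    have hui : ∀ i, u i = Real.exp (⟪w, x i⟫ + b k) • ek := by
      intro i
      ext j
      show (u i) j = (Real.exp (⟪w, x i⟫ + b k) • ek) j
      by_cases h : j = k <;>
        simp [hu, hek, EuclideanSpace.single_apply, PiLp.smul_apply, h]
    calc ∑ i, (fderiv ℝ (fun p => ℓ p (y i)) (f (x i) θ)) (EuclideanSpace.single k 1)
          * Real.exp (⟪w, x i⟫ + b k)
        = ∑ i, (fderiv ℝ (fun p => ℓ p (y i)) (q i)) (u i) := by
          refine Finset.sum_congr rfl fun i _ => ?_
          rw [hui i, map_smul, smul_eq_mul, hek]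
          ring
      _ = 0 := hS
  -- Step 3b : all the coordinates of the gradients vanish
  have hc0 : ∀ (i0 : Fin m) (k : Fin dy),
      (fderiv ℝ (fun p => ℓ p (y i0)) (f (x i0) θ)) (EuclideanSpace.single k 1) = 0 := by
    intro i0 k
    obtain ⟨ε, hε, Hk⟩ := hkey k
    have happ := sum_exp_zero_of_ball_aux074 hdx x
      (fun i => (fderiv ℝ (fun p => ℓ p (y i)) (f (x i) θ)) (EuclideanSpace.single k 1)
        * Real.exp (b k)) (W k) hε ?_ ?_ i0
    · rcases mul_eq_zero.1 happ with hh | hh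
      · exact hh
      · exact absurd hh (Real.exp_ne_zero _)
    · intro w hw
      have := Hk w hw
      rw [← this]
      refine Finset.sum_congr rfl fun i _ => ?_
      rw [Real.exp_add]
      ring
    · intro i j hxij
      have hyij : y i = y j := hrealizable i j hxij
      simp only [hxij, hyij]
  -- Step 3c : the gradients vanish
  have hgrad : ∀ i, gradient (fun p => ℓ p (y i)) (f (x i) θ) = 0 := by
    intro i
    have hfd : fderiv ℝ (fun p => ℓ p (y i)) (f (x i) θ) = 0 := by
      refine ContinuousLinearMap.ext fun v => ?_
      have hvsum : v = ∑ k, v k • EuclideanSpace.single k (1:ℝ) := by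
        have := (EuclideanSpace.basisFun (Fin dy) ℝ).sum_repr v
        simpa using this.symm
      rw [hvsum]
      simp only [map_sum, map_smul, hc0 i, smul_eq_mul, mul_zero, Finset.sum_const_zero,
        ContinuousLinearMap.zero_apply]
    rw [gradient, hfd]
    simp
  -- conclusions
  have hglobal : ∀ (i : Fin m) (q' : EuclideanSpace ℝ (Fin dy)),
      ℓ (f (x i) θ) (y i) ≤ ℓ q' (y i) := fun i => hstat i (f (x i) θ) (hgrad i)
  refine ⟨?_, ⟨rfl, ?_, hLt0⟩, hglobal⟩
  · intro θ'
    rw [hL, hL]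
    have hmn : (0:ℝ) ≤ 1 / (m : ℝ) := by positivity
    exact mul_le_mul_of_nonneg_left
      (Finset.sum_le_sum fun i _ => hglobal i (f (x i) θ')) hmn
  · intro x'
    rw [hadd0 b W x', add_zero]
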